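/- Let Ω be an open subset of a topological measure space with a closed nonnegative quadratic form E, form domain F, and let λ₁(Ω) := inf{E(f)/‖f‖₂² : f ∈ F_c(Ω), f ≠ 0}, where F_c(Ω) is the set of elements of F compactly supported in Ω. Suppose the localized Nash inequality holds: for every ball B(x,r) and f ∈ F_c(B(x,r)), ‖f‖₂^{2(1+α)} ≤ (C r²/v_r(x)^α) ‖f‖₁^{2α} E(f). Then for every ball B(x,r) and every open Ω ⊆ B(x,r), λ₁(Ω) ≥ (c/r²)(v_r(x)/μ(Ω))^α with c = C^{−1}. -/

import Mathlib

open MeasureTheory ENNReal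

/-- The homogeneous localized Nash inequality `(HLN^v_α)` implies the relative
`v`-Faber–Krahn inequality `(FK^v_α)`: if for every ball `B(x,r)` and every
`f ∈ F_c(B(x,r))` one has `‖f‖₂^{2(1+α)} ≤ (C r²/v_r(x)^α) ‖f‖₁^{2α} E(f)`, then for
every ball `B(x,r)` and every open `Ω ⊆ B(x,r)`,
`λ₁(Ω) := inf{E(f)/‖f‖₂² : f ∈ F_c(Ω), f ≠ 0} ≥ (c/r²)(v_r(x)/μ(Ω))^α` with `c = C⁻¹`. -/
theorem stmt19 {M : Type*} [PseudoMetricSpace M] [MeasurableSpace M] (μ : Measure M)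
    (v : M → ℝ → ℝ) (hv_pos : ∀ x r, 0 < r → 0 < v x r)
    (F : Set (M → ℝ)) (E : (M → ℝ) → ℝ≥0∞)
    (hF2 : ∀ f ∈ F, MemLp f 2 μ)
    (α : ℝ) (hα : 0 < α)
    (C : ℝ≥0∞) (hC : 0 < C)
    (hHLN : ∀ (x : M) (r : ℝ), 0 < r → ∀ f : M → ℝ,
      f ∈ F → tsupport f ⊆ Metric.ball x r → IsCompact (tsupport f) →
      (eLpNorm f 2 μ) ^ (2 * (1 + α)) ≤
        (C * ENNReal.ofReal (r ^ 2) / ENNReal.ofReal (v x r) ^ α) *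
          (eLpNorm f 1 μ) ^ (2 * α) * E f) :
    ∀ (x : M) (r : ℝ), 0 < r → ∀ Ω : Set M, IsOpen Ω → Ω ⊆ Metric.ball x r →
      (C * ENNReal.ofReal (r ^ 2))⁻¹ * (ENNReal.ofReal (v x r) / μ Ω) ^ α ≤
        ⨅ f ∈ {f : M → ℝ | f ∈ F ∧ tsupport f ⊆ Ω ∧ IsCompact (tsupport f) ∧
          eLpNorm f 2 μ ≠ 0}, E f / (eLpNorm f 2 μ) ^ 2 := by
  intro x r hr Ω hΩopen hΩsub
  set R : ℝ≥0∞ := C * ENNReal.ofReal (r ^ 2) with hR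
  set V : ℝ≥0∞ := ENNReal.ofReal (v x r) with hV
  have hV0 : V ≠ 0 := by
    exact (ENNReal.ofReal_pos.mpr (hv_pos x r hr)).ne'
  have hVtop : V ≠ ∞ := ENNReal.ofReal_ne_top
  have hVα0 : V ^ α ≠ 0 := by
    simp [ENNReal.rpow_eq_zero_iff, hV0, hVtop]
  have hVαtop : V ^ α ≠ ∞ := by
    simp [ENNReal.rpow_eq_top_iff, hV0, hVtop]
  refine le_iInf₂ fun f hf => ?_
  obtain ⟨hfF, hfsupp, hfcpt, hfN2⟩ := hf
  set N2 : ℝ≥0∞ := eLpNorm f 2 μ with hN2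
  set N1 : ℝ≥0∞ := eLpNorm f 1 μ with hN1
  have hN2top : N2 ≠ ∞ := (hF2 f hfF).2.ne
  -- HLN applied
  have hkey : N2 ^ (2 * (1 + α)) ≤ (R / V ^ α) * N1 ^ (2 * α) * E f :=
    hHLN x r hr f hfF (hfsupp.trans hΩsub) hfcpt
  -- Hölder
  have hholder : N1 ≤ N2 * μ Ω ^ ((1 : ℝ) / 2) := by
    have hrestr1 : eLpNorm f 1 (μ.restrict Ω) = N1 :=
      eLpNorm_restrict_eq_of_support_subset (subset_tsupport f |>.trans hfsupp)
    have hrestr2 : eLpNorm f 2 (μ.restrict Ω) = N2 :=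
      eLpNorm_restrict_eq_of_support_subset (subset_tsupport f |>.trans hfsupp)
    have := eLpNorm_le_eLpNorm_mul_rpow_measure_univ (μ := μ.restrict Ω)
      (p := 1) (q := 2) one_le_two ((hF2 f hfF).1.restrict)
    rw [hrestr1, hrestr2] at this
    norm_num at this
    simpa [Measure.restrict_apply_univ, one_div] using this
  have hN1le : N1 ^ (2 * α) ≤ N2 ^ (2 * α) * μ Ω ^ α := by
    calc N1 ^ (2 * α) ≤ (N2 * μ Ω ^ ((1 : ℝ) / 2)) ^ (2 * α) :=
          ENNReal.rpow_le_rpow hholder (by positivity)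
      _ = N2 ^ (2 * α) * μ Ω ^ α := by
          rw [ENNReal.mul_rpow_of_nonneg _ _ (by positivity), ← ENNReal.rpow_mul]
          ring_nf
  have hEne : E f ≠ 0 := by
    intro h0
    rw [h0, mul_zero] at hkey
    have : N2 ^ (2 * (1 + α)) = 0 := le_antisymm hkey (zero_le)
    rw [ENNReal.rpow_eq_zero_iff] at this
    rcases this with ⟨h, _⟩ | ⟨h, _⟩
    · exact hfN2 h
    · exact hN2top h
  rcases eq_or_ne (E f) ∞ with hEtop | hEtop
  · rw [hEtop, ENNReal.top_div_of_ne_top (by simp [pow_eq_top_iff, hN2top])]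
    exact le_top
  -- main inequality: N2^2 ≤ (R / V^α) * μΩ^α * E f
  have h2α0 : N2 ^ (2 * α) ≠ 0 := by
    simp [ENNReal.rpow_eq_zero_iff, hfN2, hN2top]
  have h2αtop : N2 ^ (2 * α) ≠ ∞ := by
    simp [ENNReal.rpow_eq_top_iff, hfN2, hN2top]
  have hsplit : N2 ^ (2 * (1 + α)) = N2 ^ (2 : ℕ) * N2 ^ (2 * α) := by
    rw [← ENNReal.rpow_natCast N2 2, ← ENNReal.rpow_add _ _ hfN2 hN2top]
    norm_num
    ring_nf
  have hmain : N2 ^ (2 : ℕ) ≤ (R / V ^ α) * μ Ω ^ α * E f := by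
    rw [← ENNReal.mul_le_mul_iff_left h2α0 h2αtop, ← hsplit]
    calc N2 ^ (2 * (1 + α)) ≤ (R / V ^ α) * N1 ^ (2 * α) * E f := hkey
      _ ≤ (R / V ^ α) * (N2 ^ (2 * α) * μ Ω ^ α) * E f := by
          gcongr
      _ = (R / V ^ α) * μ Ω ^ α * E f * N2 ^ (2 * α) := by ring
  -- rearrange into goal
  rw [ENNReal.le_div_iff_mul_le (Or.inl (by simp [pow_eq_zero_iff, hfN2]))
    (Or.inl (by simp [pow_eq_top_iff, hN2top]))]
  calc R⁻¹ * (V / μ Ω) ^ α * N2 ^ 2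
      ≤ R⁻¹ * (V / μ Ω) ^ α * ((R / V ^ α) * μ Ω ^ α * E f) := by gcongr
    _ = (R⁻¹ * R) * ((V / μ Ω) ^ α * μ Ω ^ α * (V ^ α)⁻¹) * E f := by
        rw [div_eq_mul_inv, div_eq_mul_inv]; ring
    _ ≤ 1 * (1 : ℝ≥0∞) * E f := by
        gcongr
        · exact ENNReal.inv_mul_le_one R
        · calc (V / μ Ω) ^ α * μ Ω ^ α * (V ^ α)⁻¹
              = (V / μ Ω * μ Ω) ^ α * (V ^ α)⁻¹ := by
                rw [ENNReal.mul_rpow_of_nonneg _ _ hα.le]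
            _ ≤ V ^ α * (V ^ α)⁻¹ := by
                gcongr
                rw [mul_comm]
                exact ENNReal.mul_div_le
            _ ≤ 1 := ENNReal.mul_inv_le_one _
    _ = E f := by rw [one_mul, one_mul]
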